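/- Let V be a finite-dimensional complex vector space, let Q be a quadratic form on V, and let n be the rank of Q. Then every finite-dimensional simple module over the Clifford algebra Cl(Q) has dimension 2^{⌊n/2⌋} over ℂ. -/

import Mathlib

open QuadraticMap CliffordAlgebra
noncomputable section

/-- sum of `n` squares over `ℂ` -/
abbrev QS (n : ℕ) : QuadraticForm ℂ (Fin n → ℂ) :=
  QuadraticMap.weightedSumSquares ℂ (1 : Fin n → ℂ)

lemma QS_apply (n : ℕ) (v : Fin n → ℂ) : QS n v = ∑ i, v i * v i := by
  simp [QuadraticMap.weightedSumSquares_apply]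

lemma polar_QS (n : ℕ) (x y : Fin n → ℂ) :
    QuadraticMap.polar (QS n) x y = ∑ i, 2 * (x i * y i) := by
  simp only [QuadraticMap.polar, QS_apply, Pi.add_apply]
  rw [← Finset.sum_sub_distrib, ← Finset.sum_sub_distrib]
  exact Finset.sum_congr rfl fun i _ => by ring

section rep
variable {V M : Type*} [AddCommGroup V] [Module ℂ V] [AddCommGroup M] [Module ℂ M]
  {Q : QuadraticForm ℂ V} (ρ : CliffordAlgebra Q →ₐ[ℂ] Module.End ℂ M)

lemma rep_sq (v : V) : ρ (ι Q v) * ρ (ι Q v) = algebraMap ℂ _ (Q v) := by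
  rw [← map_mul, ι_sq_scalar, AlgHom.commutes]

lemma rep_anticomm {x y : V} (h : QuadraticMap.polar Q x y = 0) :
    ρ (ι Q x) * ρ (ι Q y) = -(ρ (ι Q y) * ρ (ι Q x)) := by
  have h2 := congrArg ρ (ι_mul_ι_add_swap (Q := Q) x y)
  rw [map_add, map_mul, map_mul, AlgHom.commutes, h, map_zero] at h2
  exact eq_neg_of_add_eq_zero_left h2
end rep

lemma finrank_eq_one_of_all_triv {M : Type*} [AddCommGroup M] [Module ℂ M]
    [Nontrivial M] (h : ∀ N : Submodule ℂ M, N = ⊥ ∨ N = ⊤) :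
    Module.finrank ℂ M = 1 := by
  obtain ⟨x, hx⟩ := exists_ne (0 : M)
  have h1 : Submodule.span ℂ {x} = ⊤ := by
    rcases h (Submodule.span ℂ {x}) with h' | h'
    · exact absurd (Submodule.span_singleton_eq_bot.mp h') hx
    · exact h'
  rw [← finrank_top ℂ M, ← h1]
  exact finrank_span_singleton hx

section fins
variable {n : ℕ}

/-- extension by zero -/
def E (n : ℕ) : (Fin n → ℂ) →ₗ[ℂ] (Fin (n + 2) → ℂ) where
  toFun v := fun j => if h : (j : ℕ) < n then v ⟨j, h⟩ else 0
  map_add' x y := by funext j; dsimp; split <;> simp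
  map_smul' c x := by funext j; dsimp; split <;> simp

/-- restriction -/
def Rr (n : ℕ) (v : Fin (n + 2) → ℂ) : Fin n → ℂ := fun i => v (i.castSucc.castSucc)

def e0 (n : ℕ) : Fin (n + 2) → ℂ := Pi.single ((Fin.last n).castSucc) 1
def e1 (n : ℕ) : Fin (n + 2) → ℂ := Pi.single (Fin.last (n + 1)) 1

@[simp] lemma E_apply_lt (v : Fin n → ℂ) (i : Fin n) :
    E n v (i.castSucc.castSucc) = v i := by
  simp [E, Fin.ext_iff]

@[simp] lemma E_apply_n (v : Fin n → ℂ) : E n v ((Fin.last n).castSucc) = 0 := by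
  simp [E]

@[simp] lemma E_apply_n1 (v : Fin n → ℂ) : E n v (Fin.last (n + 1)) = 0 := by
  simp [E]

@[simp] lemma e0_apply (j : Fin (n + 2)) : e0 n j = if (j : ℕ) = n then 1 else 0 := by
  rw [e0, Pi.single_apply]
  congr 1
  simp only [eq_iff_iff, Fin.ext_iff]
  simp

@[simp] lemma e1_apply (j : Fin (n + 2)) : e1 n j = if (j : ℕ) = n + 1 then 1 else 0 := by
  rw [e1, Pi.single_apply]
  congr 1
  simp only [eq_iff_iff, Fin.ext_iff]
  simp

lemma sum_fin_split (g : Fin (n + 2) → ℂ) :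
    ∑ i, g i = (∑ i : Fin n, g (i.castSucc.castSucc)) + g ((Fin.last n).castSucc)
      + g (Fin.last (n + 1)) := by
  rw [Fin.sum_univ_castSucc, Fin.sum_univ_castSucc]

lemma sum_zero_of_lt (f : Fin n → ℂ) (h : ∀ i : Fin n, f i = 0) : ∑ i, f i = 0 :=
  Finset.sum_eq_zero fun i _ => h i

lemma QS_E (v : Fin n → ℂ) : QS (n + 2) (E n v) = QS n v := by
  rw [QS_apply, QS_apply, sum_fin_split]
  simp

lemma polar_E_e0 (v : Fin n → ℂ) :
    QuadraticMap.polar (QS (n + 2)) (E n v) (e0 n) = 0 := by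
  rw [polar_QS, sum_fin_split]
  simp only [E_apply_lt, E_apply_n, E_apply_n1, e0_apply, Fin.coe_castSucc, Fin.val_last]
  rw [sum_zero_of_lt]
  · norm_num
  · intro i
    rw [if_neg (by omega)]
    ring

lemma polar_E_e1 (v : Fin n → ℂ) :
    QuadraticMap.polar (QS (n + 2)) (E n v) (e1 n) = 0 := by
  rw [polar_QS, sum_fin_split]
  simp only [E_apply_lt, E_apply_n, E_apply_n1, e1_apply, Fin.coe_castSucc, Fin.val_last]
  rw [sum_zero_of_lt]
  · norm_num
  · intro i
    rw [if_neg (by omega)]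
    ring

lemma polar_e0_e1 :
    QuadraticMap.polar (QS (n + 2)) (e0 n) (e1 n) = 0 := by
  rw [polar_QS, sum_fin_split]
  simp only [e0_apply, e1_apply, Fin.coe_castSucc, Fin.val_last]
  rw [sum_zero_of_lt]
  · norm_num
  · intro i
    rw [if_neg (by omega)]
    ring

lemma QS_e0 : QS (n + 2) (e0 n) = 1 := by
  rw [QS_apply, sum_fin_split]
  simp only [e0_apply, Fin.coe_castSucc, Fin.val_last]
  rw [sum_zero_of_lt]
  · norm_num
  · intro i
    rw [if_neg (by omega)]
    ring

lemma QS_e1 : QS (n + 2) (e1 n) = 1 := by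
  rw [QS_apply, sum_fin_split]
  simp only [e1_apply, Fin.coe_castSucc, Fin.val_last]
  rw [sum_zero_of_lt]
  · norm_num
  · intro i
    rw [if_neg (by omega)]
    ring

lemma decomp (v : Fin (n + 2) → ℂ) :
    v = E n (Rr n v) + v ((Fin.last n).castSucc) • e0 n
      + v (Fin.last (n + 1)) • e1 n := by
  funext j
  simp only [Pi.add_apply, Pi.smul_apply, smul_eq_mul, e0_apply, e1_apply]
  by_cases h : (j : ℕ) < n
  · have hj : j = (⟨(j : ℕ), h⟩ : Fin n).castSucc.castSucc := by simp [Fin.ext_iff]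
    rw [hj, E_apply_lt]
    rw [if_neg (by simp; omega), if_neg (by simp; omega)]
    simp [Rr, ← hj]
  · by_cases h2 : (j : ℕ) = n
    · have hj : j = (Fin.last n).castSucc := by simp [Fin.ext_iff, h2]
      rw [if_pos h2, if_neg (by omega)]
      subst hj
      rw [E_apply_n]
      ring
    · have h3 : (j : ℕ) = n + 1 := by omega
      have hj : j = Fin.last (n + 1) := by simp [Fin.ext_iff, h3]
      rw [if_neg h2, if_pos h3]
      subst hj
      rw [E_apply_n1]
      ring
end fins

universe w

theorem KL : ∀ (n : ℕ) (M : Type w) [AddCommGroup M] [Module ℂ M],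
    ∀ [FiniteDimensional ℂ M] [Nontrivial M],
    ∀ (ρ : CliffordAlgebra (QS n) →ₐ[ℂ] Module.End ℂ M),
    (∀ N : Submodule ℂ M, (∀ (v : Fin n → ℂ) (m : M), m ∈ N → ρ (ι (QS n) v) m ∈ N) →
      N = ⊥ ∨ N = ⊤) →
    Module.finrank ℂ M = 2 ^ (n / 2) := by
  intro n
  induction n using Nat.twoStepInduction with
  | zero =>
    intro M _ _ _ _ ρ hsimp
    have h1 : Module.finrank ℂ M = 1 := by
      apply finrank_eq_one_of_all_triv
      intro N
      apply hsimp N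
      intro v m hm
      have hv : v = 0 := funext fun i => i.elim0
      rw [hv, map_zero, map_zero]
      exact N.zero_mem
    simpa using h1
  | one =>
    intro M _ _ _ _ ρ hsimp
    set u : Fin 1 → ℂ := fun _ => 1 with hu
    set a := ρ (ι (QS 1) u) with ha
    have ha2 : ∀ m : M, a (a m) = m := by
      intro m
      have h := rep_sq ρ u
      rw [show QS 1 u = 1 by rw [QS_apply]; simp [hu], map_one] at h
      calc a (a m) = (a * a) m := rfl
        _ = m := by rw [h]; rfl
    have key : ∀ v : Fin 1 → ℂ, ρ (ι (QS 1) v) = v 0 • a := by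
      intro v
      have hv : v = v 0 • u := by
        funext i
        have : i = 0 := Subsingleton.elim _ _
        simp [this, hu]
      rw [ha, ← _root_.map_smul ρ, ← _root_.map_smul (ι (QS 1)), ← hv]
    have scalar_case : ∀ ε : ℂ, (∀ m : M, a m = ε • m) → Module.finrank ℂ M = 1 := by
      intro ε hε
      apply finrank_eq_one_of_all_triv
      intro N
      apply hsimp N
      intro v m hm
      rw [key v]
      simp only [LinearMap.smul_apply, hε]
      exact N.smul_mem _ (N.smul_mem _ hm)
    have hinv : ∀ (v : Fin 1 → ℂ) m, m ∈ LinearMap.ker (a - 1) →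
        ρ (ι (QS 1) v) m ∈ LinearMap.ker (a - 1) := by
      intro v m hm
      rw [LinearMap.mem_ker, LinearMap.sub_apply, Module.End.one_apply] at hm ⊢
      rw [key v]
      simp only [LinearMap.smul_apply, _root_.map_smul, ha2 m]
      rw [sub_eq_zero] at hm ⊢
      rw [hm]
    have h1 : Module.finrank ℂ M = 1 := by
      rcases hsimp _ hinv with h | h
      · -- a = -1
        apply scalar_case (-1)
        intro m
        have hmem : m + a m ∈ LinearMap.ker (a - 1) := by
          rw [LinearMap.mem_ker, LinearMap.sub_apply, Module.End.one_apply, map_add, ha2]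
          abel
        rw [h, Submodule.mem_bot] at hmem
        rw [neg_smul, one_smul]
        linear_combination (norm := abel) hmem
      · -- a = 1
        apply scalar_case 1
        intro m
        have hmem : m ∈ LinearMap.ker (a - 1) := h ▸ Submodule.mem_top
        rw [LinearMap.mem_ker, LinearMap.sub_apply, Module.End.one_apply, sub_eq_zero] at hmem
        rw [hmem, one_smul]
    simpa using h1
  | more n IH _ =>
    intro M _ _ _ _ ρ hsimp
    set a := ρ (ι (QS (n + 2)) (e0 n)) with ha
    set b := ρ (ι (QS (n + 2)) (e1 n)) with hb
    have haa : a * a = 1 := by rw [ha, rep_sq, QS_e0, map_one]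
    have hbb : b * b = 1 := by rw [hb, rep_sq, QS_e1, map_one]
    have hab : a * b = -(b * a) := by
      have := rep_anticomm ρ (polar_e0_e1 (n := n))
      rw [← ha, ← hb] at this
      exact this
    set C : (Fin n → ℂ) →ₗ[ℂ] Module.End ℂ M :=
      ρ.toLinearMap ∘ₗ (ι (QS (n + 2))) ∘ₗ (E n) with hCdef
    have hC : ∀ v, C v = ρ (ι (QS (n + 2)) (E n v)) := fun v => rfl
    have hCb : ∀ v, C v * b = -(b * C v) := by
      intro v
      have := rep_anticomm ρ (polar_E_e1 v)
      rwa [← hb, ← hC] at this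
    have hbC : ∀ v, b * C v = -(C v * b) := fun v => by rw [hCb v, neg_neg]
    have hCa : ∀ v, C v * a = -(a * C v) := by
      intro v
      have := rep_anticomm ρ (polar_E_e0 v)
      rwa [← ha, ← hC] at this
    have haC : ∀ v, a * C v = -(C v * a) := fun v => by rw [hCa v, neg_neg]
    have hCC : ∀ v, C v * C v = algebraMap ℂ _ (QS n v) := by
      intro v
      rw [hC, rep_sq, QS_E]
    set θ : (Fin n → ℂ) →ₗ[ℂ] Module.End ℂ M :=
      Complex.I • ((LinearMap.mulRight ℂ b).comp C) with hθdef
    have hθ : ∀ v, θ v = Complex.I • (C v * b) := fun v => rfl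
    have hθsq : ∀ v, θ v * θ v = algebraMap ℂ (Module.End ℂ M) (QS n v) := by
      intro v
      rw [hθ, smul_mul_assoc, mul_smul_comm, smul_smul, Complex.I_mul_I]
      have h1 : C v * b * (C v * b) = -(algebraMap ℂ (Module.End ℂ M) (QS n v)) := by
        calc C v * b * (C v * b) = C v * (b * C v) * b := by noncomm_ring
          _ = C v * (-(C v * b)) * b := by rw [hbC]
          _ = -(C v * C v * (b * b)) := by noncomm_ring
          _ = -(algebraMap ℂ (Module.End ℂ M) (QS n v) * 1) := by rw [hCC, hbb]
          _ = -(algebraMap ℂ (Module.End ℂ M) (QS n v)) := by rw [mul_one]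
      rw [h1, neg_smul, one_smul, neg_neg]
    have hθa : ∀ v, a * θ v = θ v * a := by
      intro v
      rw [hθ, smul_mul_assoc, mul_smul_comm]
      congr 1
      calc a * (C v * b) = (a * C v) * b := by noncomm_ring
        _ = (-(C v * a)) * b := by rw [haC]
        _ = -(C v * (a * b)) := by noncomm_ring
        _ = -(C v * (-(b * a))) := by rw [hab]
        _ = C v * b * a := by noncomm_ring
    have hθb : ∀ v, θ v * b = -(b * θ v) := by
      intro v
      rw [hθ, smul_mul_assoc, mul_smul_comm, ← smul_neg]
      congr 1
      have h2 : -(b * (C v * b)) = C v * b * b := by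
        rw [show b * (C v * b) = (b * C v) * b by noncomm_ring, hbC v]
        noncomm_ring
      exact h2.symm
    -- pointwise versions
    have haa' : ∀ m : M, a (a m) = m := fun m => by
      have := LinearMap.ext_iff.mp haa m
      simpa [Module.End.mul_apply] using this
    have hbb' : ∀ m : M, b (b m) = m := fun m => by
      have := LinearMap.ext_iff.mp hbb m
      simpa [Module.End.mul_apply] using this
    have hab' : ∀ m : M, a (b m) = -(b (a m)) := fun m => by
      have := LinearMap.ext_iff.mp hab m
      simpa [Module.End.mul_apply] using this
    have hθa' : ∀ v (m : M), a (θ v m) = θ v (a m) := fun v m => by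
      have := LinearMap.ext_iff.mp (hθa v) m
      simpa [Module.End.mul_apply] using this
    have hθb' : ∀ v (m : M), θ v (b m) = -(b (θ v m)) := fun v m => by
      have := LinearMap.ext_iff.mp (hθb v) m
      simpa [Module.End.mul_apply] using this
    -- eigenspaces
    set Mp : Submodule ℂ M := LinearMap.ker (a - 1) with hMp
    set Mm : Submodule ℂ M := LinearMap.ker (a + 1) with hMm
    have hmemp : ∀ m : M, m ∈ Mp ↔ a m = m := by
      intro m
      rw [hMp, LinearMap.mem_ker, LinearMap.sub_apply, Module.End.one_apply, sub_eq_zero]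
    have hmemm : ∀ m : M, m ∈ Mm ↔ a m = -m := by
      intro m
      rw [hMm, LinearMap.mem_ker, LinearMap.add_apply, Module.End.one_apply,
        add_eq_zero_iff_eq_neg]
    have hInv : ∀ v, ∀ m ∈ Mp, θ v m ∈ Mp := by
      intro v m hm
      rw [hmemp] at hm ⊢
      rw [hθa', hm]
    have hbpm : ∀ m ∈ Mp, b m ∈ Mm := by
      intro m hm
      rw [hmemp] at hm
      rw [hmemm, hab', hm]
    have hbmp : ∀ m ∈ Mm, b m ∈ Mp := by
      intro m hm
      rw [hmemm] at hm
      rw [hmemp, hab', hm, _root_.map_neg, neg_neg]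
    have hsup : Mp ⊔ Mm = ⊤ := by
      rw [eq_top_iff]
      intro m _
      have h1 : (2⁻¹ : ℂ) • (m + a m) ∈ Mp := by
        rw [hmemp, _root_.map_smul, map_add, haa']
        rw [show a m + m = m + a m from add_comm _ _]
      have h2 : (2⁻¹ : ℂ) • (m - a m) ∈ Mm := by
        rw [hmemm, _root_.map_smul, _root_.map_sub, haa', ← smul_neg, neg_sub]
      refine Submodule.mem_sup.mpr ⟨_, h1, _, h2, ?_⟩
      rw [← smul_add]
      rw [show m + a m + (m - a m) = (2 : ℂ) • m by rw [two_smul]; abel]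
      rw [smul_smul]
      norm_num
    have hinf : Mp ⊓ Mm = ⊥ := by
      rw [eq_bot_iff]
      intro m hm
      obtain ⟨h1, h2⟩ := Submodule.mem_inf.mp hm
      rw [hmemp] at h1
      rw [hmemm] at h2
      rw [Submodule.mem_bot]
      have h3 : (2 : ℂ) • m = 0 := by
        have h4 : m = -m := h1.symm.trans h2
        rw [two_smul]
        nth_rewrite 1 [h4]
        exact neg_add_cancel m
      have := smul_eq_zero.mp h3
      simpa using this
    -- the identity C v = I • (b * θ v)
    have hCid : ∀ v, C v = Complex.I • (b * θ v) := by
      intro v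
      have hstep : -(b * C v * b) = Complex.I • (b * θ v) := by
        rw [hθ v, mul_smul_comm, smul_smul, Complex.I_mul_I, neg_smul, one_smul, mul_assoc]
      rw [← hstep]
      calc C v = C v * (b * b) := by rw [hbb, mul_one]
        _ = -(-(C v * b) * b) := by noncomm_ring
        _ = -(b * C v * b) := by rw [← hbC v, mul_assoc]
    have hCpt : ∀ v (x : M), C v x = Complex.I • b (θ v x) := by
      intro v x
      have := LinearMap.ext_iff.mp (hCid v) x
      simpa [Module.End.mul_apply, LinearMap.smul_apply] using this
    -- restricted representation
    set θ' : (Fin n → ℂ) →ₗ[ℂ] Module.End ℂ ↥Mp :=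
      { toFun := fun v => (θ v).restrict (hInv v)
        map_add' := by
          intro x y
          refine LinearMap.ext fun m => Subtype.ext ?_
          simp [LinearMap.restrict_apply]
        map_smul' := by
          intro c x
          refine LinearMap.ext fun m => Subtype.ext ?_
          simp [LinearMap.restrict_apply] } with hθ'def
    have hθ'pt : ∀ v (m : ↥Mp), (↑(θ' v m) : M) = θ v ↑m := by
      intro v m
      simp [hθ'def, LinearMap.restrict_apply]
    have hθ'sq : ∀ v, θ' v * θ' v = algebraMap ℂ (Module.End ℂ ↥Mp) (QS n v) := by
      intro v
      refine LinearMap.ext fun m => Subtype.ext ?_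
      have h1 := LinearMap.ext_iff.mp (hθsq v) ↑m
      rw [Module.End.mul_apply] at h1
      rw [Module.End.mul_apply, Module.algebraMap_end_apply]
      rw [Module.algebraMap_end_apply] at h1
      rw [Submodule.coe_smul, hθ'pt, hθ'pt, h1]
    set ρ'' : CliffordAlgebra (QS n) →ₐ[ℂ] Module.End ℂ ↥Mp :=
      CliffordAlgebra.lift (QS n) ⟨θ', hθ'sq⟩ with hρ''def
    have hρ''ι : ∀ v, ρ'' (ι (QS n) v) = θ' v := fun v => by
      rw [hρ''def, CliffordAlgebra.lift_ι_apply]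
    -- nontriviality of Mp
    have hMpne : Mp ≠ ⊥ := by
      intro hbot
      have hMmbot : Mm = ⊥ := by
        rw [eq_bot_iff]
        intro m hm
        have h1 : b m ∈ Mp := hbmp m hm
        rw [hbot, Submodule.mem_bot] at h1
        have h2 : b (b m) = 0 := by rw [h1, map_zero]
        rw [hbb'] at h2
        simpa using h2
      rw [hbot, hMmbot] at hsup
      simp only [sup_idem] at hsup
      exact absurd hsup.symm top_ne_bot
    have hMpnt : Nontrivial ↥Mp := Submodule.nontrivial_iff_ne_bot.mpr hMpne
    -- finrank relations
    have hfr : Module.finrank ℂ ↥Mp = Module.finrank ℂ ↥Mm := by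
      refine LinearEquiv.finrank_eq (LinearEquiv.ofLinear (b.restrict hbpm) (b.restrict hbmp) ?_ ?_)
      · refine LinearMap.ext fun m => Subtype.ext ?_
        simp [LinearMap.restrict_apply, hbb']
      · refine LinearMap.ext fun m => Subtype.ext ?_
        simp [LinearMap.restrict_apply, hbb']
    have hfrM : Module.finrank ℂ M = Module.finrank ℂ ↥Mp + Module.finrank ℂ ↥Mm := by
      have h1 := Submodule.finrank_sup_add_finrank_inf_eq Mp Mm
      rw [hsup, hinf, finrank_top, finrank_bot, add_zero] at h1
      exact h1
    -- simplicity for the restricted representation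
    have hsimp'' : ∀ N : Submodule ℂ ↥Mp,
        (∀ (v : Fin n → ℂ), ∀ m ∈ N, (ρ'' (ι (QS n) v)) m ∈ N) → N = ⊥ ∨ N = ⊤ := by
      intro N hN
      have hNθ : ∀ (v : Fin n → ℂ), ∀ m ∈ N, θ' v m ∈ N := by
        intro v m hm
        have := hN v m hm
        rwa [hρ''ι] at this
      set N1 : Submodule ℂ M := N.map Mp.subtype with hN1
      set N2 : Submodule ℂ M := N1.map b with hN2
      have claimA : ∀ x ∈ N1 ⊔ N2, a x ∈ N1 ⊔ N2 := by
        intro x hx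
        obtain ⟨y, hy, z, hz, rfl⟩ := Submodule.mem_sup.mp hx
        rw [map_add]
        refine Submodule.add_mem _ (Submodule.mem_sup_left ?_) (Submodule.mem_sup_right ?_)
        · obtain ⟨m, hm, rfl⟩ := Submodule.mem_map.mp hy
          rw [show a (Mp.subtype m) = Mp.subtype m from (hmemp _).mp m.2]
          exact Submodule.mem_map_of_mem hm
        · obtain ⟨y1, hy1, rfl⟩ := Submodule.mem_map.mp hz
          obtain ⟨m, hm, rfl⟩ := Submodule.mem_map.mp hy1
          rw [hab', show a (Mp.subtype m) = Mp.subtype m from (hmemp _).mp m.2]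
          exact Submodule.neg_mem _ (Submodule.mem_map_of_mem (Submodule.mem_map_of_mem hm))
      have claimB : ∀ x ∈ N1 ⊔ N2, b x ∈ N1 ⊔ N2 := by
        intro x hx
        obtain ⟨y, hy, z, hz, rfl⟩ := Submodule.mem_sup.mp hx
        rw [map_add]
        refine Submodule.add_mem _ (Submodule.mem_sup_right ?_) (Submodule.mem_sup_left ?_)
        · exact Submodule.mem_map_of_mem hy
        · obtain ⟨y1, hy1, rfl⟩ := Submodule.mem_map.mp hz
          rw [hbb']
          exact hy1
      have claimC : ∀ (v : Fin n → ℂ), ∀ x ∈ N1 ⊔ N2, C v x ∈ N1 ⊔ N2 := by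
        intro v x hx
        obtain ⟨y, hy, z, hz, rfl⟩ := Submodule.mem_sup.mp hx
        rw [map_add]
        refine Submodule.add_mem _ (Submodule.mem_sup_right ?_) (Submodule.mem_sup_left ?_)
        · obtain ⟨m, hm, rfl⟩ := Submodule.mem_map.mp hy
          rw [hCpt]
          have h1 : θ v (Mp.subtype m) = Mp.subtype (θ' v m) := (hθ'pt v m).symm
          rw [h1]
          exact Submodule.smul_mem _ _
            (Submodule.mem_map_of_mem (Submodule.mem_map_of_mem (hNθ v m hm)))
        · obtain ⟨y1, hy1, rfl⟩ := Submodule.mem_map.mp hz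
          obtain ⟨m, hm, rfl⟩ := Submodule.mem_map.mp hy1
          rw [hCpt, hθb', _root_.map_neg, hbb', smul_neg]
          have h1 : θ v (Mp.subtype m) = Mp.subtype (θ' v m) := (hθ'pt v m).symm
          rw [h1]
          exact Submodule.neg_mem _
            (Submodule.smul_mem _ _ (Submodule.mem_map_of_mem (hNθ v m hm)))
      have hclosure : ∀ u : Fin (n + 2) → ℂ, ∀ x ∈ N1 ⊔ N2,
          ρ (ι (QS (n + 2)) u) x ∈ N1 ⊔ N2 := by
        intro u x hx
        have hiu : ρ (ι (QS (n + 2)) u)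
            = C (Rr n u) + u ((Fin.last n).castSucc) • a + u (Fin.last (n + 1)) • b := by
          have h3 : ι (QS (n + 2)) u = ι (QS (n + 2)) (E n (Rr n u))
              + u ((Fin.last n).castSucc) • ι (QS (n + 2)) (e0 n)
              + u (Fin.last (n + 1)) • ι (QS (n + 2)) (e1 n) := by
            conv_lhs => rw [decomp u]
            simp only [map_add, _root_.map_smul]
          rw [h3, map_add, map_add, _root_.map_smul ρ, _root_.map_smul ρ, ← hC, ← ha, ← hb]
        rw [hiu]
        simp only [LinearMap.add_apply, LinearMap.smul_apply]
        refine Submodule.add_mem _ (Submodule.add_mem _ ?_ ?_) ?_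
        · exact claimC _ x hx
        · exact Submodule.smul_mem _ _ (claimA x hx)
        · exact Submodule.smul_mem _ _ (claimB x hx)
      rcases hsimp (N1 ⊔ N2) hclosure with h | h
      · left
        rw [eq_bot_iff]
        intro m hm
        have h1 : (↑m : M) ∈ N1 ⊔ N2 := Submodule.mem_sup_left (Submodule.mem_map_of_mem hm)
        rw [h, Submodule.mem_bot] at h1
        exact (Submodule.mem_bot ℂ).mpr (Subtype.ext h1)
      · right
        rw [eq_top_iff]
        intro m _
        have hm' : (↑m : M) ∈ N1 ⊔ N2 := by rw [h]; trivial
        obtain ⟨y, hy, z, hz, hsum'⟩ := Submodule.mem_sup.mp hm'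
        obtain ⟨m₀, hm₀, rfl⟩ := Submodule.mem_map.mp hy
        obtain ⟨y1, hy1, rfl⟩ := Submodule.mem_map.mp hz
        obtain ⟨m₁, hm₁, rfl⟩ := Submodule.mem_map.mp hy1
        have hz' : b (Mp.subtype m₁) ∈ Mm := hbpm _ m₁.2
        have hdiff : (↑m : M) - Mp.subtype m₀ ∈ Mp := Submodule.sub_mem _ m.2 m₀.2
        have heq : (↑m : M) - Mp.subtype m₀ = b (Mp.subtype m₁) := by
          rw [← hsum']; abel
        have h0 : (↑m : M) - Mp.subtype m₀ ∈ Mp ⊓ Mm :=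
          Submodule.mem_inf.mpr ⟨hdiff, heq ▸ hz'⟩
        rw [hinf, Submodule.mem_bot, sub_eq_zero] at h0
        have : m = m₀ := Subtype.ext h0
        rw [this]
        exact hm₀
    -- apply the induction hypothesis
    have hfrp : Module.finrank ℂ ↥Mp = 2 ^ (n / 2) := IH ↥Mp ρ'' hsimp''
    rw [hfrM, ← hfr, hfrp]
    have h2 : (n + 2) / 2 = n / 2 + 1 := by omega
    rw [h2, pow_succ]
    ring




/-- Every finite-dimensional simple module over the Clifford algebra of a
quadratic form `Q` of rank `n` on a finite-dimensional complex vector space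
has complex dimension `2^⌊n/2⌋`.  The rank of `Q` is `dim V` minus the
dimension of the radical of the polar bilinear form of `Q`. -/
theorem stmt6 {V : Type*} [AddCommGroup V] [Module ℂ V] [FiniteDimensional ℂ V]
    (Q : QuadraticForm ℂ V) (n : ℕ)
    (hn : n = Module.finrank ℂ V -
      Module.finrank ℂ (LinearMap.ker (QuadraticMap.polarBilin Q)))
    (M : Type*) [AddCommGroup M] [Module ℂ M] [Module (CliffordAlgebra Q) M]
    [IsScalarTower ℂ (CliffordAlgebra Q) M] [FiniteDimensional ℂ M]
    (hM : IsSimpleModule (CliffordAlgebra Q) M) :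
    Module.finrank ℂ M = 2 ^ (n / 2) := by
  haveI := hM
  haveI hMnt : Nontrivial M := by
    rcases exists_pair_ne (Submodule (CliffordAlgebra Q) M) with ⟨p, q, hpq⟩
    by_contra h
    rw [not_nontrivial_iff_subsingleton] at h
    exact hpq (Subsingleton.elim p q)
  set K : Submodule ℂ V := LinearMap.ker (QuadraticMap.polarBilin Q) with hK
  -- radical vectors annihilate M
  have hK0 : ∀ u ∈ K, ∀ m : M, ι Q u • m = 0 := by
    intro u hu
    have hpol : ∀ w : V, QuadraticMap.polar Q w u = 0 := by
      intro w
      have h1 : QuadraticMap.polarBilin Q u = 0 := LinearMap.mem_ker.mp hu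
      have h2 : QuadraticMap.polarBilin Q u w = 0 := by rw [h1]; rfl
      rw [QuadraticMap.polarBilin_apply_apply] at h2
      rw [QuadraticMap.polar_comm]
      exact h2
    have hQu : Q u = 0 := by
      have h1 := hpol u
      rw [QuadraticMap.polar_self] at h1
      have := smul_eq_zero.mp h1
      simpa using this
    have hcomm : ∀ x : CliffordAlgebra Q,
        x * ι Q u = ι Q u * CliffordAlgebra.involute x := by
      intro x
      induction x using CliffordAlgebra.induction with
      | algebraMap r => rw [AlgHom.commutes, Algebra.commutes]
      | ι w =>
        have h1 := CliffordAlgebra.ι_mul_ι_add_swap (Q := Q) w u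
        rw [hpol w, map_zero, add_eq_zero_iff_eq_neg] at h1
        rw [h1, CliffordAlgebra.involute_ι, mul_neg]
      | mul x y hx hy =>
        rw [map_mul, mul_assoc, hy, ← mul_assoc, hx, mul_assoc]
      | add x y hx hy =>
        rw [add_mul, hx, hy, map_add, mul_add]
    intro m
    set Nu : Submodule (CliffordAlgebra Q) M :=
      { carrier := Set.range (fun m : M => ι Q u • m)
        add_mem' := by
          rintro x y ⟨m1, rfl⟩ ⟨m2, rfl⟩
          exact ⟨m1 + m2, smul_add _ _ _⟩
        zero_mem' := ⟨0, smul_zero _⟩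
        smul_mem' := by
          rintro c x ⟨m1, rfl⟩
          refine ⟨CliffordAlgebra.involute c • m1, ?_⟩
          dsimp only
          rw [smul_smul, smul_smul, hcomm c] } with hNu
    rcases eq_bot_or_eq_top Nu with h | h
    · have : ι Q u • m ∈ Nu := ⟨m, rfl⟩
      rw [h, Submodule.mem_bot] at this
      exact this
    · exfalso
      obtain ⟨x, hx⟩ := exists_ne (0 : M)
      have h1 : x ∈ Nu := by rw [h]; trivial
      obtain ⟨m1, hm1⟩ := h1
      have h2 : m1 ∈ Nu := by rw [h]; trivial
      obtain ⟨m2, hm2⟩ := h2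
      apply hx
      rw [← hm1, ← hm2]
      show ι Q u • (ι Q u • m2) = 0
      rw [smul_smul, CliffordAlgebra.ι_sq_scalar, hQu, map_zero, zero_smul]
  -- complement of the radical
  obtain ⟨W, hW⟩ := Submodule.exists_isCompl K
  set nW := Module.finrank ℂ ↥W with hnW
  have hnWn : nW = n := by
    have h1 := Submodule.finrank_add_eq_of_isCompl hW
    have h2 : Module.finrank ℂ ↥K ≤ Module.finrank ℂ V := Submodule.finrank_le K
    omega
  set QW : QuadraticForm ℂ ↥W := Q.comp W.subtype with hQW
  have hQWapp : ∀ x : ↥W, QW x = Q ↑x := fun x => rfl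
  have hpolW : ∀ x y : ↥W, QuadraticMap.polar QW x y = QuadraticMap.polar Q ↑x ↑y := by
    intro x y
    simp [QuadraticMap.polar, hQWapp]
  set isoW : QW →qᵢ Q := { toLinearMap := W.subtype, map_app' := fun m => rfl } with hisoW
  -- nondegeneracy of QW
  have hsep : (QuadraticMap.associated (R := ℂ) QW).SeparatingLeft := by
    intro x hx
    have hpolx : ∀ y : ↥W, QuadraticMap.polar QW x y = 0 := by
      intro y
      have h1 : QuadraticMap.polarBilin QW x y
          = (2 • QuadraticMap.associatedHom ℂ QW) x y := by
        rw [QuadraticMap.two_nsmul_associated]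
      rw [QuadraticMap.polarBilin_apply_apply] at h1
      rw [h1, LinearMap.smul_apply, LinearMap.smul_apply, hx y, smul_zero]
    -- x is in the radical of Q
    have hrad : (↑x : V) ∈ K := by
      rw [hK, LinearMap.mem_ker]
      ext v
      rw [LinearMap.zero_apply, QuadraticMap.polarBilin_apply_apply]
      have hv : v ∈ K ⊔ W := by rw [hW.codisjoint.eq_top]; trivial
      obtain ⟨k, hk, w', hw', rfl⟩ := Submodule.mem_sup.mp hv
      rw [QuadraticMap.polar_add_right]
      have h2 : QuadraticMap.polar Q (↑x) k = 0 := by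
        rw [QuadraticMap.polar_comm]
        have h3 : QuadraticMap.polarBilin Q k = 0 := LinearMap.mem_ker.mp hk
        have h4 : QuadraticMap.polarBilin Q k ↑x = 0 := by rw [h3]; rfl
        rwa [QuadraticMap.polarBilin_apply_apply] at h4
      have h5 : QuadraticMap.polar Q (↑x) w' = 0 := by
        have := hpolx ⟨w', hw'⟩
        rwa [hpolW] at this
      rw [h2, h5, add_zero]
    have h6 : (↑x : V) = 0 := by
      have := hW.disjoint
      rw [Submodule.disjoint_def] at this
      exact this _ hrad x.2
    exact Subtype.ext h6
  -- the equivalence with a sum of squares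
  have hEquiv : QuadraticMap.Equivalent QW (QS nW) :=
    QuadraticForm.equivalent_sum_squares QW hsep
  obtain ⟨e⟩ := hEquiv
  -- representations
  set ρ₀ : CliffordAlgebra Q →ₐ[ℂ] Module.End ℂ M := Algebra.lsmul ℂ ℂ M with hρ₀
  have hρ₀app : ∀ (x : CliffordAlgebra Q) (m : M), ρ₀ x m = x • m := fun x m => rfl
  set Φ : CliffordAlgebra (QS nW) ≃ₐ[ℂ] CliffordAlgebra QW :=
    CliffordAlgebra.equivOfIsometry e.symm with hΦ
  set Ψ : CliffordAlgebra QW →ₐ[ℂ] CliffordAlgebra Q := CliffordAlgebra.map isoW with hΨ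
  set ρ : CliffordAlgebra (QS nW) →ₐ[ℂ] Module.End ℂ M :=
    ρ₀.comp (Ψ.comp Φ.toAlgHom) with hρ
  have hρι : ∀ v : Fin nW → ℂ, ∀ m : M, ρ (ι (QS nW) v) m = ι Q ↑(e.symm v) • m := by
    intro v m
    have h1 : Φ (ι (QS nW) v) = ι QW (e.symm v) := by
      rw [hΦ, CliffordAlgebra.equivOfIsometry_apply, CliffordAlgebra.map_apply_ι]
      rfl
    have h2 : Ψ (ι QW (e.symm v)) = ι Q ↑(e.symm v) := by
      rw [hΨ, CliffordAlgebra.map_apply_ι]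
      rfl
    rw [hρ]
    simp only [AlgHom.coe_comp, Function.comp_apply, AlgEquiv.toAlgHom_eq_coe,
      AlgHom.coe_coe]
    change ρ₀ (Ψ (Φ (ι (QS nW) v))) m = _
    rw [h1, h2, hρ₀app]
  -- KL simplicity hypothesis
  have hsimpKL : ∀ N : Submodule ℂ M,
      (∀ (v : Fin nW → ℂ), ∀ m ∈ N, (ρ (ι (QS nW) v)) m ∈ N) → N = ⊥ ∨ N = ⊤ := by
    intro N hN
    have hgen : ∀ (x : V) (m : M), m ∈ N → ι Q x • m ∈ N := by
      intro x m hm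
      have hv : x ∈ K ⊔ W := by rw [hW.codisjoint.eq_top]; trivial
      obtain ⟨k, hk, w', hw', rfl⟩ := Submodule.mem_sup.mp hv
      rw [map_add, add_smul, hK0 k hk m, zero_add]
      have h1 := hN (e ⟨w', hw'⟩) m hm
      rw [hρι] at h1
      have h2 : e.symm (e ⟨w', hw'⟩) = ⟨w', hw'⟩ := by
        have := e.toLinearEquiv.symm_apply_apply ⟨w', hw'⟩
        exact this
      rw [h2] at h1
      exact h1
    have hall : ∀ (x : CliffordAlgebra Q) (m : M), m ∈ N → x • m ∈ N := by
      intro x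
      induction x using CliffordAlgebra.induction with
      | algebraMap r =>
        intro m hm
        rw [algebraMap_smul]
        exact N.smul_mem r hm
      | ι w => exact hgen w
      | mul x y hx hy =>
        intro m hm
        rw [mul_smul]
        exact hx _ (hy _ hm)
      | add x y hx hy =>
        intro m hm
        rw [add_smul]
        exact N.add_mem (hx m hm) (hy m hm)
    set N' : Submodule (CliffordAlgebra Q) M :=
      { carrier := N
        add_mem' := fun hx hy => N.add_mem hx hy
        zero_mem' := N.zero_mem
        smul_mem' := fun c {x} hx => hall c x hx } with hN'
    have hmemN' : ∀ x : M, x ∈ N' ↔ x ∈ N := fun x => Iff.rfl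
    rcases eq_bot_or_eq_top N' with h | h
    · left
      rw [eq_bot_iff]
      intro x hx
      have : x ∈ N' := (hmemN' x).mpr hx
      rw [h, Submodule.mem_bot] at this
      rw [Submodule.mem_bot]
      exact this
    · right
      rw [eq_top_iff]
      intro x _
      have : x ∈ N' := by rw [h]; trivial
      exact (hmemN' x).mp this
  have hfinal := KL nW M ρ hsimpKL
  rw [hfinal, hnWn]
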